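/- Let X_1, ..., X_B be integrable, independent and identically distributed real-valued random variables on a probability space, B ≥ 1, and 1 ≤ n ≤ B. For each outcome, let X_{(1)} ≤ ... ≤ X_{(B)} denote the sorted values, and define W_n^B = ∑_{i=1}^B X_{(i)} (C(i+n−1,n) − C(i+n−2,n))/C(B+n−1,n) and V_n^B = ∑_{i=1}^B X_{(i)} (i^n − (i−1)^n)/B^n. Then E[W_n^B] ≤ E[V_n^B]; that is, the bias of W_n^B as an estimator of E[max(X_1,...,X_n)] is at most the bias of V_n^B. -/

import Mathlib

open Finset MeasureTheory ProbabilityTheory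

private lemma key_nat {B n k : ℕ} (hk : k ≤ B) :
    k ^ n * (B + n - 1).choose n ≤ (k + n - 1).choose n * B ^ n := by
  have h1 : B.ascFactorial n = Nat.factorial n * (B + n - 1).choose n :=
    Nat.ascFactorial_eq_factorial_mul_choose' B n
  have h2 : k.ascFactorial n = Nat.factorial n * (k + n - 1).choose n :=
    Nat.ascFactorial_eq_factorial_mul_choose' k n
  have key : ∀ m : ℕ, B.ascFactorial m * k ^ m ≤ k.ascFactorial m * B ^ m := by
    intro m; induction m with
    | zero => simp
    | succ m ih =>
      rw [Nat.ascFactorial_succ, Nat.ascFactorial_succ, pow_succ, pow_succ]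
      calc (B + m) * B.ascFactorial m * (k ^ m * k)
          = ((B + m) * k) * (B.ascFactorial m * k ^ m) := by ring
        _ ≤ ((k + m) * B) * (k.ascFactorial m * B ^ m) :=
            Nat.mul_le_mul (by nlinarith) ih
        _ = (k + m) * k.ascFactorial m * (B ^ m * B) := by ring
  have h3 : Nat.factorial n * ((B + n - 1).choose n * k ^ n) ≤ Nat.factorial n * ((k + n - 1).choose n * B ^ n) := by
    rw [← Nat.mul_assoc, ← Nat.mul_assoc, ← h1, ← h2]; exact key n
  have h4 := Nat.le_of_mul_le_mul_left h3 (Nat.factorial_pos n)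
  calc k ^ n * (B + n - 1).choose n = (B + n - 1).choose n * k ^ n := Nat.mul_comm _ _
    _ ≤ _ := h4

private lemma pointwise_sum_le {B n : ℕ} (hB : 1 ≤ B) (hn : 1 ≤ n) (hnB : n ≤ B)
    (y : Fin B → ℝ) (hy : Monotone y) :
    ∑ i : Fin B, y i * ((((i.1 + n).choose n : ℝ) - ((i.1 + n - 1).choose n : ℝ))
          / ((B + n - 1).choose n : ℝ))
      ≤ ∑ i : Fin B, y i * ((((i.1 : ℝ) + 1) ^ n - ((i.1 : ℝ)) ^ n) / (B : ℝ) ^ n) := by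
  set e : ℕ → ℝ := fun k =>
    ((k + n - 1).choose n : ℝ) / ((B + n - 1).choose n : ℝ) - (k : ℝ) ^ n / (B : ℝ) ^ n
    with he
  have hDpos : (0:ℝ) < ((B + n - 1).choose n : ℝ) := by
    exact_mod_cast Nat.choose_pos (by omega)
  have hBpos : (0:ℝ) < (B:ℝ)^n := by positivity
  have he0 : e 0 = 0 := by
    simp only [he]
    rw [Nat.choose_eq_zero_of_lt (by omega)]
    simp [zero_pow (by omega : n ≠ 0)]
  have heB : e B = 0 := by
    simp only [he]
    rw [div_self hDpos.ne', div_self hBpos.ne']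
    ring
  have hek : ∀ k, k ≤ B → 0 ≤ e k := by
    intro k hk
    simp only [he, sub_nonneg]
    rw [div_le_div_iff₀ hBpos hDpos]
    exact_mod_cast key_nat hk
  set z : ℕ → ℝ := fun k => y ⟨min k (B-1), by omega⟩ with hz
  have hzmono : Monotone z := by
    intro a b hab
    exact hy (show (⟨min a (B-1), by omega⟩ : Fin B) ≤ ⟨min b (B-1), by omega⟩ from by
      simp only [Fin.mk_le_mk]; omega)
  rw [← sub_nonneg, ← Finset.sum_sub_distrib]
  have hterm : ∀ i : Fin B,
      y i * ((((i.1 : ℝ) + 1) ^ n - ((i.1 : ℝ)) ^ n) / (B : ℝ) ^ n)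
        - y i * ((((i.1 + n).choose n : ℝ) - ((i.1 + n - 1).choose n : ℝ))
            / ((B + n - 1).choose n : ℝ))
      = (fun k : ℕ => z k * (e k - e (k+1))) i.1 := by
    intro i
    have h1 : i.1 + 1 + n - 1 = i.1 + n := by omega
    have hzi : z i.1 = y i := by
      simp only [hz]
      congr 1
      exact Fin.ext (by simp; omega)
    simp only [he]
    rw [hzi, h1]
    push_cast
    ring
  rw [Finset.sum_congr rfl (fun i _ => hterm i)]
  rw [Fin.sum_univ_eq_sum_range (fun k => z k * (e k - e (k+1))) B]
  obtain ⟨m, rfl⟩ : ∃ m, B = m + 1 := ⟨B - 1, by omega⟩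
  have expand : ∑ k ∈ range (m+1), z k * (e k - e (k+1))
      = ∑ k ∈ range m, (z (k+1) - z k) * e (k+1) := by
    simp_rw [mul_sub]
    rw [Finset.sum_sub_distrib, Finset.sum_range_succ' (fun k => z k * e k) m,
        Finset.sum_range_succ (fun k => z k * e (k+1)) m, he0, heB]
    simp only [mul_zero, add_zero]
    rw [← Finset.sum_sub_distrib]
    exact Finset.sum_congr rfl fun k _ => by ring
  rw [expand]
  apply Finset.sum_nonneg
  intro k hk
  have hkm : k < m := Finset.mem_range.mp hk
  exact mul_nonneg (sub_nonneg.2 (hzmono (Nat.le_succ k))) (hek (k+1) (by omega))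

private lemma measurable_inf'_apply {ι : Type*} {δ : Type*} [MeasurableSpace δ]
    {s : Finset ι} (hs : s.Nonempty) {f : ι → δ → ℝ}
    (hf : ∀ i ∈ s, Measurable (f i)) :
    Measurable fun x => s.inf' hs fun i => f i x := by
  have h : (fun x => s.inf' hs fun i => f i x) = s.inf' hs f := by
    funext x; rw [Finset.inf'_apply]
  rw [h]
  exact Finset.inf'_induction hs _ (fun a ha b hb => ha.inf hb) hf

private lemma measurable_sup'_apply {ι : Type*} {δ : Type*} [MeasurableSpace δ]
    {s : Finset ι} (hs : s.Nonempty) {f : ι → δ → ℝ}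
    (hf : ∀ i ∈ s, Measurable (f i)) :
    Measurable fun x => s.sup' hs fun i => f i x := by
  have h : (fun x => s.sup' hs fun i => f i x) = s.sup' hs f := by
    funext x; rw [Finset.sup'_apply]
  rw [h]
  exact Finset.sup'_induction hs _ (fun a ha b hb => ha.sup hb) hf

/-- Let `X 0, ..., X (B-1)` be integrable, i.i.d. real random variables on a probability
space, `B ≥ 1`, `1 ≤ n ≤ B`, and let `Y` give, for each outcome, the sorted values
(order statistics) of the `X i`.  With
`W_n^B = ∑_{i=1}^B X_{(i)} (C(i+n-1,n) - C(i+n-2,n))/C(B+n-1,n)` and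
`V_n^B = ∑_{i=1}^B X_{(i)} (i^n - (i-1)^n)/B^n`, we have `E[W_n^B] ≤ E[V_n^B]`:
the (nonpositive) bias of `W_n^B` as an estimator of `E[max(X_1,...,X_n)]` is at most
the bias of `V_n^B`. -/
theorem expectation_W_le_expectation_V {Ω : Type*} [MeasurableSpace Ω]
    (μ : MeasureTheory.Measure Ω) [IsProbabilityMeasure μ]
    {B n : ℕ} (hB : 1 ≤ B) (hn : 1 ≤ n) (hnB : n ≤ B)
    (X : Fin B → Ω → ℝ)
    (hmeas : ∀ i, Measurable (X i))
    (hint : ∀ i, Integrable (X i) μ)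
    (hindep : iIndepFun X μ)
    (hident : ∀ i j, IdentDistrib (X i) (X j) μ μ)
    (Y : Fin B → Ω → ℝ)
    (hsorted : ∀ ω, Monotone fun i => Y i ω)
    (hperm : ∀ ω, ∃ σ : Equiv.Perm (Fin B), ∀ i, Y i ω = X (σ i) ω) :
    (∫ ω, ∑ i : Fin B, Y i ω *
        ((((i.1 + n).choose n : ℝ) - ((i.1 + n - 1).choose n : ℝ))
          / ((B + n - 1).choose n : ℝ)) ∂μ)
      ≤ ∫ ω, ∑ i : Fin B, Y i ω *
          ((((i.1 : ℝ) + 1) ^ n - ((i.1 : ℝ)) ^ n) / (B : ℝ) ^ n) ∂μ := by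
  classical
  -- order statistic formula: Y i is measurable
  have hYmeas : ∀ i : Fin B, Measurable (Y i) := by
    intro i
    set P : Finset (Finset (Fin B)) := Finset.powersetCard (i.1 + 1) univ with hPdef
    have hP : P.Nonempty := by
      rw [hPdef]
      exact Finset.powersetCard_nonempty.2 (by simp [Finset.card_univ])
    have hPa : P.attach.Nonempty := hP.attach
    have hSne : ∀ S : {x // x ∈ P}, (S.1 : Finset (Fin B)).Nonempty := by
      intro S
      apply Finset.card_pos.mp
      rw [(Finset.mem_powersetCard.1 S.2).2]
      omega
    have hG : Y i = fun ω =>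
        P.attach.inf' hPa fun S => S.1.sup' (hSne S) fun j => X j ω := by
      funext ω
      obtain ⟨σ, hσ⟩ := hperm ω
      have hXY : ∀ j : Fin B, X j ω = Y (σ.symm j) ω := by
        intro j; rw [hσ (σ.symm j), Equiv.apply_symm_apply]
      apply le_antisymm
      · apply Finset.le_inf'
        intro S _
        -- find an element of S whose σ.symm-image is ≥ i
        have hcard : (S.1.image σ.symm).card = i.1 + 1 := by
          rw [Finset.card_image_of_injective _ σ.symm.injective,
            (Finset.mem_powersetCard.1 S.2).2]
        have hex : ∃ t ∈ S.1.image σ.symm, i ≤ t := by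
          by_contra hcon
          push_neg at hcon
          have hsub : S.1.image σ.symm ⊆ Finset.Iio i := by
            intro t ht
            exact Finset.mem_Iio.2 (hcon t ht)
          have := Finset.card_le_card hsub
          rw [hcard, Fin.card_Iio] at this
          omega
        obtain ⟨t, ht, hit⟩ := hex
        obtain ⟨j₀, hj₀, rfl⟩ := Finset.mem_image.1 ht
        calc Y i ω ≤ Y (σ.symm j₀) ω := hsorted ω hit
          _ = X j₀ ω := (hXY j₀).symm
          _ ≤ S.1.sup' (hSne _) fun j => X j ω := Finset.le_sup' (fun j => X j ω) hj₀
      · have hS₀mem : (Finset.Iic i).image σ ∈ P := by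
          rw [hPdef, Finset.mem_powersetCard]
          refine ⟨Finset.subset_univ _, ?_⟩
          rw [Finset.card_image_of_injective _ σ.injective, Fin.card_Iic]
        refine le_trans (Finset.inf'_le _ (Finset.mem_attach _ ⟨_, hS₀mem⟩)) ?_
        have hIic : (Finset.Iic i).Nonempty := ⟨i, Finset.mem_Iic.2 le_rfl⟩
        rw [Finset.sup'_image]
        apply Finset.sup'_le
        intro t ht
        calc X (σ t) ω = Y t ω := (hσ t).symm
          _ ≤ Y i ω := hsorted ω (Finset.mem_Iic.1 ht)
    rw [hG]
    exact measurable_inf'_apply hPa fun S _ =>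
      measurable_sup'_apply (hSne S) fun j _ => hmeas j
  have hYint : ∀ i : Fin B, Integrable (Y i) μ := by
    intro i
    refine (integrable_finset_sum univ fun j _ => (hint j).abs).mono'
      (hYmeas i).aestronglyMeasurable ?_
    filter_upwards with ω
    obtain ⟨σ, hσ⟩ := hperm ω
    rw [Real.norm_eq_abs, hσ i]
    exact Finset.single_le_sum (f := fun j => |X j ω|) (fun j _ => abs_nonneg _)
      (Finset.mem_univ (σ i))
  refine integral_mono ?_ ?_ ?_
  · exact integrable_finset_sum _ fun i _ => (hYint i).mul_const _
  · exact integrable_finset_sum _ fun i _ => (hYint i).mul_const _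
  · intro ω
    exact pointwise_sum_le hB hn hnB (fun i => Y i ω) (hsorted ω)
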